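/- Fix positive integers t, ℓ and a binary code C_H of length n_H = t(ℓ-1). For b ∈ C_H define a(b) = 0^ℓ 1 b₁^{ℓ-1} 1 b_ℓ^{2(ℓ-1)} 1 ⋯ b_{(t-1)(ℓ-1)+1}^{t(ℓ-1)} 1, i.e., the word obtained by prefixing ℓ zeros and then interleaving the t blocks of b of length ℓ-1 with single 1s (a 1 before each block and a final 1). Then C_parse = { a(b) : b ∈ C_H } ⊆ {0,1}^n with n = (t+1)ℓ+1 is a mutually uncorrelated code, |C_parse| = |C_H|, and the minimum Hamming distance of C_parse equals that of C_H. -/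

import Mathlib

/-- The parsing map: b ↦ 0^ℓ 1 B₁ 1 B₂ 1 ⋯ B_t 1, where B₁,…,B_t are the blocks
of b of length ℓ-1. (Here `false` plays the role of 0 and `true` of 1.) -/
def parse (ℓ : ℕ) (b : List Bool) : List Bool :=
  List.replicate ℓ false ++ true :: ((b.toChunks (ℓ - 1)).map (fun c => c ++ [true])).flatten

/-- Hamming distance between two lists of equal length. -/
def listHD (a b : List Bool) : ℕ :=
  ((a.zip b).filter fun p => p.1 != p.2).length

/-- Reference chunking function: split into blocks of size `m+1`. -/
def chunksRef (m : ℕ) : List Bool → List (List Bool)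
  | [] => []
  | x :: xs => ((x :: xs).take (m+1)) :: chunksRef m ((x :: xs).drop (m+1))
  termination_by l => l.length
  decreasing_by simp

lemma chunksRef_nil (m : ℕ) : chunksRef m [] = [] := by rw [chunksRef]

lemma chunksRef_of_short (m : ℕ) (l : List Bool) (h0 : l ≠ []) (h : l.length ≤ m+1) :
    chunksRef m l = [l] := by
  cases l with
  | nil => exact absurd rfl h0
  | cons x xs =>
    rw [chunksRef, List.take_of_length_le h, List.drop_of_length_le h, chunksRef_nil]

lemma chunksRef_cons_of_len (m : ℕ) (l r : List Bool) (h : l.length = m+1) :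
    chunksRef m (l ++ r) = l :: chunksRef m r := by
  cases l with
  | nil => simp at h
  | cons x xs =>
    rw [List.cons_append, chunksRef, ← List.cons_append,
      List.take_append_of_le_length (by omega), List.take_of_length_le (by omega),
      List.drop_append_of_le_length (by omega), List.drop_of_length_le (by omega),
      List.nil_append]

lemma go_spec (m : ℕ) : ∀ (xs : List Bool) (acc₁ : Array Bool) (acc₂ : Array (List Bool)),
    0 < acc₁.size → acc₁.size ≤ m+1 →
    List.toChunks.go (m+1) xs acc₁ acc₂ = acc₂.toList ++ chunksRef m (acc₁.toList ++ xs) := by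
  intro xs
  induction xs with
  | nil =>
    intro acc₁ acc₂ h1 h2
    show (acc₂.push acc₁.toList).toList = _
    have hlen : acc₁.toList.length = acc₁.size := by simp
    rw [Array.toList_push, List.append_nil,
      chunksRef_of_short m _ (by intro hc; rw [hc] at hlen; simp at hlen; omega) (by omega)]
  | cons x xs ih =>
    intro acc₁ acc₂ h1 h2
    rw [List.toChunks.go]
    by_cases h : acc₁.size = m+1
    · simp only [h, beq_self_eq_true, if_true]
      rw [ih _ _ (by simp) (by simp), Array.toList_push]
      have hx : ((Array.mkEmpty (m+1) : Array Bool).push x).toList = [x] := by simp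
      have hl : acc₁.toList.length = m+1 := by rw [Array.length_toList]; exact h
      rw [hx, chunksRef_cons_of_len m _ _ hl]
      simp
    · rw [if_neg (by simp [h])]
      rw [ih _ _ (by simp) (by simp; omega), Array.toList_push]
      simp

lemma toChunks_eq_chunksRef (m : ℕ) (l : List Bool) : l.toChunks (m+1) = chunksRef m l := by
  cases l with
  | nil => rw [chunksRef_nil]; rfl
  | cons x xs =>
    show List.toChunks.go (m+1) xs #[x] #[] = _
    rw [go_spec m xs #[x] #[] (by simp) (by simp)]
    simp

lemma chunksRef_spec (m : ℕ) : ∀ (t : ℕ) (l : List Bool), l.length = t * (m+1) →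
    (chunksRef m l).length = t ∧ (∀ c ∈ chunksRef m l, c.length = m+1) ∧
    (chunksRef m l).flatten = l := by
  intro t
  induction t with
  | zero =>
    intro l hl
    simp at hl
    subst hl
    simp [chunksRef_nil]
  | succ t ih =>
    intro l hl
    have hlen : l.length = (m+1) + t * (m+1) := by rw [hl]; ring
    have hpos : 0 < l.length := by omega
    obtain ⟨x, xs, rfl⟩ := List.exists_cons_of_ne_nil (List.ne_nil_of_length_pos hpos)
    have h1 : chunksRef m (x :: xs) = ((x :: xs).take (m+1)) :: chunksRef m ((x :: xs).drop (m+1)) := by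
      rw [chunksRef]
    obtain ⟨ih1, ih2, ih3⟩ := ih ((x :: xs).drop (m+1)) (by rw [List.length_drop]; omega)
    refine ⟨by rw [h1, List.length_cons, ih1], ?_, ?_⟩
    · intro c hc
      rw [h1] at hc
      rcases List.mem_cons.1 hc with h | h
      · subst h; rw [List.length_take]; omega
      · exact ih2 c h
    · rw [h1, List.flatten_cons, ih3, List.take_append_drop]

lemma flat_spec (m : ℕ) : ∀ L : List (List Bool), (∀ c ∈ L, c.length = m+1) →
    ((L.map (fun c => c ++ [true])).flatten.length = L.length * (m+2) ∧
    ∀ j, 1 ≤ j → j ≤ L.length →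
      ((L.map (fun c => c ++ [true])).flatten)[j*(m+2) - 1]? = some true) := by
  intro L
  induction L with
  | nil =>
    intro _
    refine ⟨by simp, ?_⟩
    intro j h1 h2
    simp at h2
    omega
  | cons c L ih =>
    intro hc
    have hcl : c.length = m+1 := hc c List.mem_cons_self
    obtain ⟨ih1, ih2⟩ := ih (fun c' h => hc c' (List.mem_cons_of_mem _ h))
    have hfl : ((c :: L).map (fun c => c ++ [true])).flatten
        = (c ++ [true]) ++ (L.map (fun c => c ++ [true])).flatten := by
      simp
    constructor
    · rw [hfl, List.length_append, List.length_append, ih1, hcl]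
      simp only [List.length_cons, List.length_nil, Nat.succ_mul]
      omega
    · intro j hj1 hj2
      rw [hfl]
      rcases Nat.lt_or_ge j 2 with hj | hj
      · have hj1' : j = 1 := by omega
        subst hj1'
        rw [List.getElem?_append_left (by simp only [List.length_append, hcl, List.length_cons, List.length_nil]; omega)]
        have : 1 * (m+2) - 1 = c.length + 0 := by omega
        rw [this, List.getElem?_append_right (by omega)]
        simp
      · obtain ⟨jj, rfl⟩ : ∃ jj, j = jj + 2 := ⟨j - 2, by omega⟩
        have harith : (jj+2)*(m+2) - 1 = (c ++ [true]).length + ((jj+1)*(m+2) - 1) := by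
          rw [List.length_append, hcl, Nat.add_mul, Nat.add_mul]
          simp; omega
        rw [harith, List.getElem?_append_right (by omega)]
        have : (c ++ [true]).length + ((jj+1)*(m+2) - 1) - (c ++ [true]).length
            = (jj+1)*(m+2) - 1 := by omega
        rw [this]
        exact ih2 (jj+1) (by omega) (by simp at hj2 ⊢; omega)

lemma listHD_self (l : List Bool) : listHD l l = 0 := by
  induction l with
  | nil => rfl
  | cons x xs ih => simpa [listHD, List.filter] using ih

lemma listHD_append (u v u' v' : List Bool) (h : u.length = u'.length) :
    listHD (u ++ v) (u' ++ v') = listHD u u' + listHD v v' := by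
  unfold listHD
  rw [List.zip_append h, List.filter_append, List.length_append]

lemma listHD_eq_zero_iff : ∀ u v : List Bool, u.length = v.length →
    (listHD u v = 0 → u = v) := by
  intro u
  induction u with
  | nil => intro v hv _; simpa using hv.symm
  | cons x xs ih =>
    intro v hv h0
    cases v with
    | nil => simp at hv
    | cons y ys =>
      unfold listHD at h0
      rw [List.zip_cons_cons, List.filter_cons] at h0
      by_cases hxy : x = y
      · subst hxy
        simp at h0
        rw [ih ys (by simpa using hv) (by simpa [listHD] using h0)]
      · have : (x != y) = true := by simp [hxy]
        rw [this] at h0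
        simp at h0

lemma listHD_cons (a : Bool) (u v : List Bool) : listHD (a :: u) (a :: v) = listHD u v := by
  simp [listHD, List.zip, List.filter]

lemma listHD_flat : ∀ (L L' : List (List Bool)),
    List.Forall₂ (fun c c' => c.length = c'.length) L L' →
    listHD ((L.map (fun c => c ++ [true])).flatten) ((L'.map (fun c => c ++ [true])).flatten)
      = listHD L.flatten L'.flatten := by
  intro L L' h
  induction h with
  | nil => simp [listHD]
  | @cons a b l₁ l₂ hab h ih =>
    have e1 : ((a :: l₁).map (fun c => c ++ [true])).flatten
        = (a ++ [true]) ++ (l₁.map (fun c => c ++ [true])).flatten := by simp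
    have e2 : ((b :: l₂).map (fun c => c ++ [true])).flatten
        = (b ++ [true]) ++ (l₂.map (fun c => c ++ [true])).flatten := by simp
    rw [e1, e2, listHD_append _ _ _ _ (by simp [hab]),
      List.flatten_cons, List.flatten_cons, listHD_append _ _ _ _ hab,
      listHD_append _ _ _ _ hab, listHD_self, ih]
    omega

lemma parse_eq (m : ℕ) (b : List Bool) : parse (m+2) b =
    List.replicate (m+2) false ++ true :: ((chunksRef m b).map (fun c => c ++ [true])).flatten := by
  unfold parse
  rw [show m+2-1 = m+1 from rfl, toChunks_eq_chunksRef]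

lemma lt_div_succ_mul (a b : ℕ) (hb : 0 < b) : a < (a / b + 1) * b := by
  conv_lhs => rw [← Nat.div_add_mod a b]
  rw [Nat.add_mul, one_mul, Nat.mul_comm]
  exact Nat.add_lt_add_left (Nat.mod_lt a hb) _

section ParseLemmas

variable {t m : ℕ} {b : List Bool} (hb : b.length = t * (m+1))

lemma parse_length (hb : b.length = t * (m+1)) :
    (parse (m+2) b).length = (t+1)*(m+2)+1 := by
  obtain ⟨s1, s2, _⟩ := chunksRef_spec m t b hb
  rw [parse_eq, List.length_append, List.length_cons, (flat_spec m _ s2).1, s1,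
    List.length_replicate, Nat.succ_mul]
  omega

lemma parse_get_lt (i : ℕ) (hi : i < m+2) : (parse (m+2) b)[i]? = some false := by
  rw [parse_eq, List.getElem?_append_left (by rw [List.length_replicate]; omega),
    List.getElem?_replicate]
  simp [hi]

lemma parse_get_mul (hb : b.length = t * (m+1)) (k : ℕ) (hk1 : 1 ≤ k) (hk2 : k ≤ t+1) :
    (parse (m+2) b)[k*(m+2)]? = some true := by
  obtain ⟨s1, s2, _⟩ := chunksRef_spec m t b hb
  rw [parse_eq, List.getElem?_append_right
    (by rw [List.length_replicate]; exact Nat.le_mul_of_pos_left _ hk1)]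
  rw [List.length_replicate]
  rcases Nat.lt_or_ge k 2 with hk | hk
  · have : k = 1 := by omega
    subst this
    rw [show 1*(m+2) - (m+2) = 0 from by omega]
    simp
  · obtain ⟨kk, rfl⟩ : ∃ kk, k = kk + 2 := ⟨k - 2, by omega⟩
    have h1 : (kk+2)*(m+2) - (m+2) = ((kk+1)*(m+2) - 1) + 1 := by
      rw [Nat.add_mul, Nat.add_mul]
      omega
    rw [h1, List.getElem?_cons_succ]
    exact (flat_spec m _ s2).2 (kk+1) (by omega) (by rw [s1]; omega)

end ParseLemmas

theorem stmt_12 (t ℓ : ℕ) (ht : 1 ≤ t) (hℓ : 2 ≤ ℓ)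
    (CH : Finset (List Bool)) (hlen : ∀ b ∈ CH, b.length = t * (ℓ - 1)) :
    (∀ b ∈ CH, (parse ℓ b).length = (t + 1) * ℓ + 1) ∧
    (∀ x ∈ CH.image (parse ℓ), ∀ y ∈ CH.image (parse ℓ), ∀ p : List Bool,
      p ≠ [] → p.length < (t + 1) * ℓ + 1 → p <+: x → ¬ p <:+ y) ∧
    (CH.image (parse ℓ)).card = CH.card ∧
    (∀ b ∈ CH, ∀ b' ∈ CH, listHD (parse ℓ b) (parse ℓ b') = listHD b b') := by
  obtain ⟨m, rfl⟩ : ∃ m, ℓ = m + 2 := ⟨ℓ - 2, by omega⟩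
  have hb' : ∀ b ∈ CH, b.length = t * (m+1) := by
    intro b hb
    have := hlen b hb
    simpa using this
  have h1 : ∀ b ∈ CH, (parse (m+2) b).length = (t+1)*(m+2)+1 :=
    fun b hb => parse_length (hb' b hb)
  have h4 : ∀ b ∈ CH, ∀ b' ∈ CH, listHD (parse (m+2) b) (parse (m+2) b') = listHD b b' := by
    intro b hb b' hb'C
    obtain ⟨s1, s2, s3⟩ := chunksRef_spec m t b (hb' b hb)
    obtain ⟨s1', s2', s3'⟩ := chunksRef_spec m t b' (hb' b' hb'C)
    have hf2 : List.Forall₂ (fun c c' => c.length = c'.length) (chunksRef m b) (chunksRef m b') := by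
      rw [List.forall₂_iff_get]
      refine ⟨by rw [s1, s1'], fun i hi1 hi2 => ?_⟩
      rw [s2 _ (List.get_mem _ ⟨i, hi1⟩), s2' _ (List.get_mem _ ⟨i, hi2⟩)]
    rw [parse_eq, parse_eq, listHD_append _ _ _ _ rfl, listHD_self, listHD_cons,
      listHD_flat _ _ hf2, s3, s3']
    omega
  refine ⟨h1, ?_, ?_, h4⟩
  · -- mutual uncorrelatedness
    intro x hx y hy p hp hplen hpre hsuf
    obtain ⟨b, hbC, rfl⟩ := Finset.mem_image.1 hx
    obtain ⟨b', hbC', rfl⟩ := Finset.mem_image.1 hy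
    obtain ⟨s, hs⟩ := hpre
    obtain ⟨r, hr⟩ := hsuf
    have hyl : r.length + p.length = (t+1)*(m+2)+1 := by
      have := h1 b' hbC'
      rw [← hr, List.length_append] at this
      omega
    have hp1 : 1 ≤ p.length := List.length_pos_iff.2 hp
    have key : ∀ i k, i < m+2 → i < p.length → k*(m+2) = r.length + i →
        1 ≤ k → k ≤ t+1 → False := by
      intro i k hi hip hk hk1 hk2
      have e1 : (parse (m+2) b')[k*(m+2)]? = some true := parse_get_mul (hb' b' hbC') k hk1 hk2
      have e2 : (parse (m+2) b')[k*(m+2)]? = some false := by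
        rw [← hr, hk, List.getElem?_append_right (by omega),
          show r.length + i - r.length = i from by omega,
          ← List.getElem?_append_left (l₂ := s) hip, hs]
        exact parse_get_lt i hi
      rw [e1] at e2
      simp at e2
    rcases Nat.lt_or_ge p.length (m+3) with hc | hc
    · exact key (p.length - 1) (t+1) (by omega) (by omega) (by omega) (by omega) (by omega)
    · have d1 : r.length - 1 < ((r.length-1)/(m+2)+1)*(m+2) := lt_div_succ_mul _ _ (by omega)
      have d2 : ((r.length-1)/(m+2))*(m+2) ≤ r.length - 1 := Nat.div_mul_le_self _ _
      generalize (r.length-1)/(m+2) = q at d1 d2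
      have d3 : (q+1)*(m+2) = q*(m+2) + (m+2) := by ring
      have hk2 : q+1 ≤ t+1 := by
        by_contra hcon
        have : (t+2)*(m+2) ≤ (q+1)*(m+2) := Nat.mul_le_mul_right _ (by omega)
        have h5 : (t+2)*(m+2) = (t+1)*(m+2) + (m+2) := by ring
        omega
      exact key ((q+1)*(m+2) - r.length) (q+1) (by omega) (by omega) (by omega)
        (by omega) hk2
  · -- cardinality
    apply Finset.card_image_of_injOn
    intro b hb b'' hb'' hpe
    apply listHD_eq_zero_iff b b'' (by rw [hb' b hb, hb' b'' hb''])
    rw [← h4 b hb b'' hb'', hpe, listHD_self]
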